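/- The set of 2×2 matrices over an algebraically closed field K of characteristic 0 that have strength at most 1 (i.e., can be written as a u⊗v + b v⊗u for some scalars a,b and vectors u,v ∈ K²) is not Zariski-closed in K^{2×2}. -/

import Mathlib

open Matrix

/-- The matrix `!![1, x; 0, 1]` has strength at most 1 whenever `x ^ 2 ≠ 4`. -/
theorem strength_le_one_aux (K : Type*) [Field K] [IsAlgClosed K] [CharZero K] (x : K)
    (hx : x^2 ≠ 4) :
    ∃ (a b : K) (u v : Fin 2 → K),
      !![1, x; 0, 1] = a • vecMulVec u v + b • vecMulVec v u := by
  obtain ⟨t, ht⟩ := IsAlgClosed.exists_root (Polynomial.X^2 - Polynomial.C x * Polynomial.X + 1)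
    (by
      have : (Polynomial.X^2 - Polynomial.C x * Polynomial.X + 1 : Polynomial K).degree = 2 := by
        compute_degree!
      simp [this])
  have ht' : t^2 - x*t + 1 = 0 := by simpa [Polynomial.IsRoot] using ht
  have ht0 : t ≠ 0 := by rintro rfl; simp at ht'
  have ht1 : 1 - t^2 ≠ 0 := by
    intro h
    have h1 : t^2 = 1 := by linear_combination -h
    have hxt : x*t = 2 := by linear_combination -ht' + h1
    exact hx (by linear_combination (x*t+2)*hxt - x^2*h1)
  refine ⟨1/(1-t^2), -t^2/(1-t^2), ![1, t], ![1, t⁻¹], ?_⟩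
  ext i j
  fin_cases i <;> fin_cases j <;>
      simp [vecMulVec, Matrix.add_apply, Matrix.smul_apply] <;> field_simp
  · ring
  · linear_combination (t^2-1)*ht'
  · ring
  · ring

/-- The matrix `!![1, 2; 0, 1]` does not have strength at most 1. -/
theorem not_strength_le_one_aux (K : Type*) [Field K] [CharZero K] :
    ¬ ∃ (a b : K) (u v : Fin 2 → K),
      !![1, 2; 0, 1] = a • vecMulVec u v + b • vecMulVec v u := by
  rintro ⟨a, b, u, v, h⟩
  have h00 := congrFun (congrFun h 0) 0
  have h01 := congrFun (congrFun h 0) 1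
  have h10 := congrFun (congrFun h 1) 0
  have h11 := congrFun (congrFun h 1) 1
  simp [vecMulVec, Matrix.add_apply, Matrix.smul_apply] at h00 h01 h10 h11
  set r := u 0 * v 1 with hr
  set s := u 1 * v 0 with hs
  set p := u 0 * v 0 with hp
  set q := u 1 * v 1 with hq
  have e00 : (a + b) * p = 1 := by rw [hp]; linear_combination -h00
  have e11 : (a + b) * q = 1 := by rw [hq]; linear_combination -h11
  have e01 : a * r + b * s = 2 := by rw [hr, hs]; linear_combination -h01
  have e10 : a * s + b * r = 0 := by rw [hr, hs]; linear_combination -h10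
  have hrs : r * s = p * q := by rw [hr, hs, hp, hq]; ring
  have hab : a + b ≠ 0 := fun h => by simp [h] at e00
  have hpq : p = q := mul_left_cancel₀ hab (e00.trans e11.symm)
  have hrs2 : r * s = p ^ 2 := by linear_combination hrs - p * hpq
  have hp0 : p ≠ 0 := fun h => by simp [h] at e00
  have hr0 : r ≠ 0 := by
    intro h
    exact hp0 (by
      have : p ^ 2 = 0 := by rw [← hrs2, h]; ring
      exact pow_eq_zero_iff (n := 2) (by norm_num) |>.mp this)
  rcases eq_or_ne a 0 with ha | ha
  · subst ha
    simp at e10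
    rcases e10 with e10 | e10
    · exact hab (by simp [e10])
    · exact hr0 e10
  · rcases eq_or_ne r s with hrr | hrr
    · have : (a + b) * r = 0 := by linear_combination e10 + a * hrr
      rcases mul_eq_zero.mp this with h' | h'
      · exact hab h'
      · exact hr0 h'
    · have key1 : a * (r ^ 2 - s ^ 2) = 2 * r := by linear_combination r * e01 - s * e10
      have key2 : a * (r - s) * p = r := by linear_combination r * e00 - p * e10
      have key3 : r + s = 2 * p :=
        mul_left_cancel₀ (mul_ne_zero ha (sub_ne_zero.mpr hrr))
          (by linear_combination key1 - 2 * key2)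
      have hz : (r - s) ^ 2 = 0 := by linear_combination (r + s + 2 * p) * key3 - 4 * hrs2
      exact hrr (sub_eq_zero.mp (pow_eq_zero_iff (n := 2) (by norm_num) |>.mp hz))

/-- The entries of `!![1, X; 0, 1]` as polynomials. -/
noncomputable def Ent (K : Type*) [Field K] : Fin 2 × Fin 2 → Polynomial K :=
  fun q => (!![1, Polynomial.X; 0, 1] : Matrix (Fin 2) (Fin 2) (Polynomial K)) q.1 q.2

theorem bridge (K : Type*) [Field K] (x : K) (p : MvPolynomial (Fin 2 × Fin 2) K) :
    MvPolynomial.eval (fun q => (!![1, x; 0, 1] : Matrix (Fin 2) (Fin 2) K) q.1 q.2) p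
      = Polynomial.eval x (MvPolynomial.aeval (Ent K) p) := by
  have h1 : Polynomial.eval x (MvPolynomial.aeval (Ent K) p)
      = (Polynomial.aeval x : Polynomial K →ₐ[K] K) (MvPolynomial.aeval (Ent K) p) := by
    rw [Polynomial.coe_aeval_eq_eval]
  rw [h1, MvPolynomial.comp_aeval_apply]
  have : (fun i => (Polynomial.aeval x : Polynomial K →ₐ[K] K) (Ent K i))
      = fun q => (!![1, x; 0, 1] : Matrix (Fin 2) (Fin 2) K) q.1 q.2 := by
    funext q
    obtain ⟨i, j⟩ := q
    fin_cases i <;> fin_cases j <;> simp [Ent]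
  rw [this]
  exact congrFun (congrArg _ (MvPolynomial.coe_aeval_eq_eval _).symm) p

/-- The set of `2 × 2` matrices of strength at most 1 is not Zariski-closed:
it is not the common zero locus of any set of polynomials in the matrix entries. -/
theorem stmt5 (K : Type*) [Field K] [IsAlgClosed K] [CharZero K] :
    ¬ ∃ S : Set (MvPolynomial (Fin 2 × Fin 2) K),
      {A : Matrix (Fin 2) (Fin 2) K | ∃ (a b : K) (u v : Fin 2 → K),
          A = a • vecMulVec u v + b • vecMulVec v u}
        = {A : Matrix (Fin 2) (Fin 2) K |
            ∀ p ∈ S, MvPolynomial.eval (fun q => A q.1 q.2) p = 0} := by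
  rintro ⟨S, hS⟩
  have hfin : ({x : K | x ^ 2 = 4} : Set K).Finite := by
    apply Set.Finite.subset (Set.toFinite ({2, -2} : Set K))
    intro x hx
    have hx2 : x ^ 2 = 4 := hx
    have hx' : (x - 2) * (x + 2) = 0 := by linear_combination hx2
    rcases mul_eq_zero.mp hx' with h | h
    · left; linear_combination h
    · right; simp only [Set.mem_singleton_iff]; linear_combination h
  have hinf : ({x : K | x ^ 2 = 4}ᶜ : Set K).Infinite := hfin.infinite_compl
  have hzero : ∀ p ∈ S, MvPolynomial.aeval (Ent K) p = 0 := by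
    intro p hp
    apply Polynomial.eq_zero_of_infinite_isRoot
    apply hinf.mono
    intro x hx
    have hx' : x ^ 2 ≠ 4 := hx
    have hmem : (!![1, x; 0, 1] : Matrix (Fin 2) (Fin 2) K) ∈
        {A : Matrix (Fin 2) (Fin 2) K | ∃ (a b : K) (u v : Fin 2 → K),
          A = a • vecMulVec u v + b • vecMulVec v u} := strength_le_one_aux K x hx'
    rw [hS] at hmem
    have h0 := hmem p hp
    rw [bridge K x p] at h0
    exact h0
  have hmem2 : (!![1, 2; 0, 1] : Matrix (Fin 2) (Fin 2) K) ∈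
      {A : Matrix (Fin 2) (Fin 2) K |
        ∀ p ∈ S, MvPolynomial.eval (fun q => A q.1 q.2) p = 0} := by
    intro p hp
    rw [bridge K 2 p, hzero p hp]
    simp
  rw [← hS] at hmem2
  exact not_strength_le_one_aux K hmem2
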